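/- Let S be an atomic monoid. Then the equal catenary degree satisfies c_equal(S) ≤ sup{ |x| : (x,y) ∈ 𝒜(∼_{S,equal}) for some y ∈ Z(S) }, the supremum of the lengths of first components of atoms of the monoid of equal-length relations. -/

import Mathlib

open scoped BigOperators

variable {S : Type*} [CancelCommMonoid S] [DecidableEq S]

/-- `z` is a factorization of `a`: a multiset of atoms with product `a`. -/
def IsFactorization (a : S) (z : Multiset S) : Prop :=
  (∀ x ∈ z, Irreducible x) ∧ z.prod = a

/-- The distance between two factorizations:
`d(z,z') = max(|z gcd(z,z')⁻¹|, |z' gcd(z,z')⁻¹|)`. -/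
def fdist (z z' : Multiset S) : ℕ :=
  max (Multiset.card (z - z')) (Multiset.card (z' - z))

/-- Membership in the monoid of equal-length relations `∼_{S,equal}`. -/
def InEqualRel (p : Multiset S × Multiset S) : Prop :=
  (∀ x ∈ p.1, Irreducible x) ∧ (∀ x ∈ p.2, Irreducible x) ∧
    p.1.prod = p.2.prod ∧ Multiset.card p.1 = Multiset.card p.2

/-- Atoms of the monoid of equal-length relations. -/
def IsEqualRelAtom (p : Multiset S × Multiset S) : Prop :=
  InEqualRel p ∧ p ≠ (0, 0) ∧
    ∀ q r : Multiset S × Multiset S, InEqualRel q → InEqualRel r →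
      p = (q.1 + r.1, q.2 + r.2) → q = (0, 0) ∨ r = (0, 0)

/-- The equal catenary degree `c_equal(a)`: the smallest `N` such that any two
factorizations of `a` of equal length can be connected by a chain of factorizations
of `a`, all of that same length, with consecutive distances `≤ N`. -/
noncomputable def cEqual (a : S) : ℕ∞ :=
  sInf {N : ℕ∞ | ∀ z z' : Multiset S, IsFactorization a z → IsFactorization a z' →
    Multiset.card z = Multiset.card z' →
    ∃ (k : ℕ) (c : Fin (k + 1) → Multiset S), c 0 = z ∧ c (Fin.last k) = z' ∧
      (∀ i, IsFactorization a (c i) ∧ Multiset.card (c i) = Multiset.card z) ∧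
      ∀ i : Fin k, (fdist (c i.castSucc) (c i.succ) : ℕ∞) ≤ N}


lemma equalRel_fst_eq_zero {S : Type*} [CancelCommMonoid S] [DecidableEq S]
    {p : Multiset S × Multiset S} (hp : InEqualRel p) (h : p.1 = 0) : p = (0, 0) := by
  obtain ⟨_, _, _, hc⟩ := hp
  rw [h] at hc
  simp only [Multiset.card_zero] at hc
  have : p.2 = 0 := Multiset.card_eq_zero.mp hc.symm
  exact Prod.ext h this

lemma exists_atom_decomp {S : Type*} [CancelCommMonoid S] [DecidableEq S] :
    ∀ (n : ℕ) (p : Multiset S × Multiset S), Multiset.card p.1 ≤ n → InEqualRel p →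
      ∃ L : List (Multiset S × Multiset S), (∀ q ∈ L, IsEqualRelAtom q) ∧
        p.1 = (L.map Prod.fst).sum ∧ p.2 = (L.map Prod.snd).sum := by
  intro n
  induction n using Nat.strong_induction_on with
  | _ n ih =>
    intro p hcard hp
    by_cases h0 : p.1 = 0
    · have hp0 := equalRel_fst_eq_zero hp h0
      exact ⟨[], by simp, by simp [hp0], by simp [hp0]⟩
    · have hne : p ≠ (0, 0) := by
        intro h; apply h0; rw [h]
      by_cases hatom : IsEqualRelAtom p
      · exact ⟨[p], by simpa using hatom, by simp, by simp⟩
      · simp only [IsEqualRelAtom, not_and, not_forall] at hatom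
        obtain ⟨q, r, hq, hr, hsplit, hqr⟩ := hatom hp hne
        push_neg at hqr
        obtain ⟨hq0, hr0⟩ := hqr
        have hq1 : q.1 ≠ 0 := fun h => hq0 (equalRel_fst_eq_zero hq h)
        have hr1 : r.1 ≠ 0 := fun h => hr0 (equalRel_fst_eq_zero hr h)
        have hps : Multiset.card p.1 = Multiset.card q.1 + Multiset.card r.1 := by
          rw [hsplit]; simp
        have hqpos : 0 < Multiset.card q.1 := Multiset.card_pos.mpr hq1
        have hrpos : 0 < Multiset.card r.1 := Multiset.card_pos.mpr hr1
        have hqlt : Multiset.card q.1 < n := by omega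
        have hrlt : Multiset.card r.1 < n := by omega
        obtain ⟨Lq, hLq, hq1', hq2'⟩ := ih _ hqlt q le_rfl hq
        obtain ⟨Lr, hLr, hr1', hr2'⟩ := ih _ hrlt r le_rfl hr
        refine ⟨Lq ++ Lr, ?_, ?_, ?_⟩
        · intro x hx
          rcases List.mem_append.mp hx with h | h
          · exact hLq x h
          · exact hLr x h
        · rw [hsplit]; simp [hq1', hr1']
        · rw [hsplit]; simp [hq2', hr2']

/-- `c_equal(S) ≤ sup{ |x| : (x,y) an atom of ∼_{S,equal} }`. -/
theorem cEqual_le_sup_atom_lengths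
    (hatomic : ∀ a : S, ¬IsUnit a →
      ∃ m : Multiset S, (∀ x ∈ m, Irreducible x) ∧ m.prod = a) :
    (⨆ a : S, cEqual a) ≤
      sSup {n : ℕ∞ | ∃ p : Multiset S × Multiset S, IsEqualRelAtom p ∧
        n = (Multiset.card p.1 : ℕ∞)} := by

  apply iSup_le
  intro a
  apply sInf_le
  intro z z' hz hz' hcard
  have hrel : InEqualRel (z, z') := ⟨hz.1, hz'.1, by rw [hz.2, hz'.2], hcard⟩
  obtain ⟨L, hL, h1, h2⟩ := exists_atom_decomp (Multiset.card z) (z, z') le_rfl hrel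
  simp only at h1 h2
  set k := L.length with hk
  -- partial-sum chain
  set C : ℕ → Multiset S := fun j =>
    ((L.take j).map Prod.snd).sum + ((L.drop j).map Prod.fst).sum with hC
  have hC0 : C 0 = z := by simp [hC, h1]
  have hCk : C k = z' := by
    rw [hk] at *
    simp only [hC, List.take_length, List.drop_length, List.map_nil, List.sum_nil, add_zero, h2]
  -- step decomposition
  have hstep : ∀ j (hj : j < k),
      C j = (((L.take j).map Prod.snd).sum + ((L.drop (j+1)).map Prod.fst).sum) + (L.get ⟨j, hj⟩).1 ∧
      C (j+1) = (((L.take j).map Prod.snd).sum + ((L.drop (j+1)).map Prod.fst).sum) + (L.get ⟨j, hj⟩).2 := by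
    intro j hj
    constructor
    · have hd : L.drop j = L[j] :: L.drop (j+1) := List.drop_eq_getElem_cons hj
      simp only [hC, hd, List.map_cons, List.sum_cons]
      simp only [List.get_eq_getElem]
      abel
    · have ht : (L.take j).concat L[j] = L.take (j+1) := List.take_concat_get hj
      simp only [hC, ← ht, List.concat_eq_append, List.map_append, List.sum_append,
        List.map_cons, List.map_nil, List.sum_cons, List.sum_nil]
      simp only [List.get_eq_getElem]
      abel
  -- invariant
  have hinv : ∀ j, j ≤ k → IsFactorization a (C j) ∧ Multiset.card (C j) = Multiset.card z := by
    intro j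
    induction j with
    | zero => intro _; rw [hC0]; exact ⟨hz, rfl⟩
    | succ j ihj =>
      intro hjk
      have hj : j < k := by omega
      obtain ⟨hfac, hcd⟩ := ihj (le_of_lt hj)
      obtain ⟨he1, he2⟩ := hstep j hj
      have hatom := hL _ (List.get_mem L ⟨j, hj⟩)
      obtain ⟨⟨ha1, ha2, ha3, ha4⟩, _, _⟩ := hatom
      constructor
      · constructor
        · intro x hx
          rw [he2, Multiset.mem_add] at hx
          rcases hx with hx | hx
          · exact hfac.1 x (by rw [he1, Multiset.mem_add]; left; exact hx)
          · exact ha2 x hx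
        · rw [he2, Multiset.prod_add, ← ha3, ← Multiset.prod_add, ← he1, hfac.2]
      · rw [he2, Multiset.card_add, ← ha4, ← Multiset.card_add, ← he1, hcd]
  refine ⟨k, fun j => C j.val, by simp [hC0], by simp [Fin.last, hCk], ?_, ?_⟩
  · intro i
    exact hinv i.val (by omega)
  · intro i
    obtain ⟨he1, he2⟩ := hstep i.val i.isLt
    have hatom := hL _ (List.get_mem L ⟨i.val, i.isLt⟩)
    obtain ⟨⟨_, _, _, ha4⟩, _, _⟩ := hatom
    simp only [Fin.coe_castSucc, Fin.val_succ]
    rw [he1, he2]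
    set w := ((L.take i.val).map Prod.snd).sum + ((L.drop (i.val+1)).map Prod.fst).sum
    set x := (L.get ⟨i.val, i.isLt⟩).1
    set y := (L.get ⟨i.val, i.isLt⟩).2
    have hdle : fdist (w + x) (w + y) ≤ Multiset.card x := by
      have e1 : w + x - (w + y) = x - y := add_tsub_add_eq_tsub_left w x y
      have e2 : w + y - (w + x) = y - x := add_tsub_add_eq_tsub_left w y x
      have c1 : Multiset.card (x - y) ≤ Multiset.card x :=
        Multiset.card_le_card (tsub_le_self)
      have c2 : Multiset.card (y - x) ≤ Multiset.card y :=
        Multiset.card_le_card (tsub_le_self)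
      rw [fdist, e1, e2]
      rw [← ha4] at c2
      exact max_le c1 c2
    calc ((fdist (w + x) (w + y) : ℕ) : ℕ∞) ≤ (Multiset.card x : ℕ∞) := by
          exact_mod_cast hdle
      _ ≤ _ := by
          apply le_sSup
          exact ⟨L.get ⟨i.val, i.isLt⟩, hL _ (List.get_mem L ⟨i.val, i.isLt⟩), rfl⟩
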